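/- arXiv:1705.10604 — 4 statements merged into one kernel-verified Lean document; each statement's English description precedes it below -/
import Mathlib

section
/- Let D be a triangulated category with shift [1], and let (X, Y) be a t-structure on D with heart H = X ∩ Y[1]. If (X', Y') is a t-structure on D with X[1] ⊆ X' ⊆ X, then the pair (T, F) with T = H ∩ X' and F = H ∩ Y' is a torsion pair in the abelian category H. -/
open CategoryTheory Category Limits Pretriangulated

namespace Paper

variable {C : Type*} [Category C] [HasZeroObject C] [Preadditive C] [HasShift C ℤ]
  [∀ n : ℤ, (shiftFunctor C n).Additive] [Pretriangulated C]

/-- The shift of a class of objects: `S⟦n⟧` (closed under isomorphism). -/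
def shiftSet (S : Set C) (n : ℤ) : Set C := {X | ∃ A ∈ S, Nonempty (X ≅ A⟦n⟧)}

/-- `S[≤ n] = { S⟦i⟧ ∣ S ∈ S, i ≤ n }`. -/
def shiftsLe (S : Set C) (n : ℤ) : Set C := {X | ∃ A ∈ S, ∃ i : ℤ, i ≤ n ∧ Nonempty (X ≅ A⟦i⟧)}

/-- `S[≥ n] = { S⟦i⟧ ∣ S ∈ S, i ≥ n }`. -/
def shiftsGe (S : Set C) (n : ℤ) : Set C := {X | ∃ A ∈ S, ∃ i : ℤ, n ≤ i ∧ Nonempty (X ≅ A⟦i⟧)}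

/-- `X * Y`: objects `D` fitting in a distinguished triangle `X → D → Y → X⟦1⟧`. -/
def star (X Y : Set C) : Set C :=
  {D | ∃ (A B : C) (f : A ⟶ D) (g : D ⟶ B) (h : B ⟶ A⟦(1 : ℤ)⟧),
    A ∈ X ∧ B ∈ Y ∧ Triangle.mk f g h ∈ distTriang C}

/-- Right perpendicular class. -/
def rightPerp (S : Set C) : Set C := {D | ∀ A ∈ S, ∀ f : A ⟶ D, f = 0}

/-- Left perpendicular class. -/
def leftPerp (S : Set C) : Set C := {D | ∀ B ∈ S, ∀ f : D ⟶ B, f = 0}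

/-- A t-structure `(X, Y)` on a (pre)triangulated category. -/
structure IsTStructure (X Y : Set C) : Prop where
  rp : rightPerp X = Y
  lp : leftPerp Y = X
  dec : ∀ D : C, D ∈ star X Y
  shift : shiftSet X 1 ⊆ X

/-- The heart `H = X ∩ Y⟦1⟧` of a t-structure. -/
def heart (X Y : Set C) : Set C := X ∩ shiftSet Y 1

/-- The extension closure of a class of objects. -/
inductive ExtClosure (S : Set C) : C → Prop
  | of {A : C} (h : A ∈ S) : ExtClosure S A
  | iso {A B : C} (e : A ≅ B) (h : ExtClosure S A) : ExtClosure S B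
  | ext {A E B : C} (f : A ⟶ E) (g : E ⟶ B) (h : B ⟶ A⟦(1 : ℤ)⟧)
      (hT : Triangle.mk f g h ∈ distTriang C)
      (hA : ExtClosure S A) (hB : ExtClosure S B) : ExtClosure S E

/-- The extension closure, as a set. -/
def extClosure (S : Set C) : Set C := {X | ExtClosure S X}

/-- A torsion pair `(T, F)` in the heart of a t-structure `(X, Y)`; short exact sequences in
the heart correspond to distinguished triangles with three terms in the heart. -/
structure IsHeartTorsionPair (X Y T F : Set C) : Prop where
  subT : T ⊆ heart X Y
  subF : F ⊆ heart X Y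
  rp : heart X Y ∩ rightPerp T = F
  lp : heart X Y ∩ leftPerp F = T
  dec : ∀ H₀ ∈ heart X Y, H₀ ∈ star T F

/-- A bounded t-structure. -/
def IsBounded (X Y : Set C) : Prop :=
  (∀ D : C, ∃ n : ℤ, D ∈ shiftSet X n) ∧ (∀ D : C, ∃ n : ℤ, D ∈ shiftSet Y n)

/-- A simple object of the heart of a t-structure: a nonzero object admitting no proper
subobjects in the heart (expressed via distinguished triangles with entries in the heart). -/
def IsSimpleInHeart (X Y : Set C) (A : C) : Prop :=
  A ∈ heart X Y ∧ ¬ IsZero A ∧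
  ∀ (A' B : C) (f : A' ⟶ A) (g : A ⟶ B) (h : B ⟶ A'⟦(1 : ℤ)⟧),
    Triangle.mk f g h ∈ (distTriang C) → A' ∈ heart X Y → B ∈ heart X Y →
    IsZero A' ∨ IsZero B

/-- An algebraic t-structure: a bounded t-structure whose heart is a length category with
finitely many simple objects, i.e. the heart is the extension closure of finitely many
simple objects. -/
def IsAlgebraic (X Y : Set C) : Prop :=
  IsTStructure X Y ∧ IsBounded X Y ∧
  ∃ (t : ℕ) (G : Fin t → C), (∀ i, IsSimpleInHeart X Y (G i)) ∧
    heart X Y = extClosure (Set.range G)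

/-- Thick closure: the smallest triangulated subcategory closed under direct summands. -/
inductive ThickClosure (S : Set C) : C → Prop
  | of {A : C} (h : A ∈ S) : ThickClosure S A
  | iso {A B : C} (e : A ≅ B) (h : ThickClosure S A) : ThickClosure S B
  | shift {A : C} (n : ℤ) (h : ThickClosure S A) : ThickClosure S (A⟦n⟧)
  | ext {A E B : C} (f : A ⟶ E) (g : E ⟶ B) (h : B ⟶ A⟦(1 : ℤ)⟧)
      (hT : Triangle.mk f g h ∈ distTriang C)
      (hA : ThickClosure S A) (hB : ThickClosure S B) : ThickClosure S E
  | retract {A B : C} (s : A ⟶ B) (r : B ⟶ A) (hsr : s ≫ r = 𝟙 A)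
      (h : ThickClosure S B) : ThickClosure S A

/-- Thick closure, as a set. -/
def thickClosure (S : Set C) : Set C := {X | ThickClosure S X}

/-- `Hom(S, T⟦i⟧) = 0` for all `i > 0`. -/
def vanishHomPos (S T : Set C) : Prop :=
  ∀ A ∈ S, ∀ B ∈ T, ∀ i : ℤ, 0 < i → ∀ f : A ⟶ B⟦i⟧, f = 0

/-- A silting subcategory `S` of the (thick) subcategory `P`. -/
def IsSiltingIn (P S : Set C) : Prop :=
  S ⊆ P ∧ thickClosure S = P ∧ vanishHomPos S S

/-- The aisle `X_S = (S[≤ 0])^⊥` of the t-structure associated to a silting subcategory. -/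
def siltXs (S : Set C) : Set C := rightPerp (shiftsLe S 0)

/-- The coaisle `Y_S = (S[≥ 0])^⊥` of the t-structure associated to a silting subcategory. -/
def siltYs (S : Set C) : Set C := rightPerp (shiftsGe S 0)

/-- A class of objects closed under isomorphisms, finite direct sums and direct summands. -/
def IsAddClosed [HasBinaryBiproducts C] (S : Set C) : Prop :=
  (∀ A B : C, (A ≅ B) → A ∈ S → B ∈ S) ∧
  (∀ A B : C, A ∈ S → B ∈ S → (A ⊞ B) ∈ S) ∧
  (∀ A B : C, (∃ (s : A ⟶ B) (r : B ⟶ A), s ≫ r = 𝟙 A) → B ∈ S → A ∈ S)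

/-- Silting-discreteness (relative to the subcategory `P` of compact objects, e.g.
`K^b(proj Λ)`): for every silting subcategory `S` of `P` there are only finitely many silting
subcategories `T` with `S ≥ T ≥ S⟦1⟧`. -/
def IsSiltingDiscrete [HasBinaryBiproducts C] (P : Set C) : Prop :=
  ∀ S : Set C, IsSiltingIn P S → IsAddClosed S →
    {T : Set C | IsSiltingIn P T ∧ IsAddClosed T ∧
      vanishHomPos S T ∧ vanishHomPos T (shiftSet S 1)}.Finite

/-- A t-structure on a full (pre)triangulated subcategory `B` of the ambient category. -/
structure IsTStructureOn (B X Y : Set C) : Prop where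
  subX : X ⊆ B
  subY : Y ⊆ B
  rp : B ∩ rightPerp X = Y
  lp : B ∩ leftPerp Y = X
  dec : ∀ D ∈ B, D ∈ star X Y
  shift : shiftSet X 1 ⊆ X


section Aux

variable {C : Type*} [Category C] [HasZeroObject C] [Preadditive C] [HasShift C ℤ]
  [∀ n : ℤ, (shiftFunctor C n).Additive] [Pretriangulated C]

/-- Maps from objects of `X⟦1⟧` to objects of `Y⟦1⟧` vanish. -/
lemma hom_zero_of_shiftY {X Y : Set C} (h : IsTStructure X Y) {D : C}
    (hD : D ∈ shiftSet Y 1) {P : C} (hP : P ∈ shiftSet X (1 : ℤ)) (f : P ⟶ D) : f = 0 := by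
  obtain ⟨Y₀, hY₀, ⟨eD⟩⟩ := hD
  obtain ⟨A₀, hA₀, ⟨eP⟩⟩ := hP
  obtain ⟨g', hg'⟩ := (shiftFunctor C (1 : ℤ)).map_surjective (eP.inv ≫ f ≫ eD.hom)
  have hg0 : g' = 0 := by
    rw [← h.rp] at hY₀
    exact hY₀ A₀ hA₀ g'
  have : eP.inv ≫ f ≫ eD.hom = 0 := by rw [← hg', hg0, Functor.map_zero]
  calc f = eP.hom ≫ (eP.inv ≫ f ≫ eD.hom) ≫ eD.inv := by simp
    _ = 0 := by rw [this]; simp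

lemma mem_shiftY_of {X Y : Set C} (h : IsTStructure X Y) {D : C}
    (hD : ∀ P ∈ shiftSet X (1 : ℤ), ∀ f : P ⟶ D, f = 0) : D ∈ shiftSet Y 1 := by
  refine ⟨D⟦(-1 : ℤ)⟧, ?_, ⟨((shiftFunctorCompIsoId C (-1 : ℤ) (1 : ℤ) (by norm_num)).app D).symm⟩⟩
  rw [← h.rp]
  intro A₀ hA₀ f
  have h0 : f⟦(1 : ℤ)⟧' ≫ (shiftFunctorCompIsoId C (-1 : ℤ) (1 : ℤ) (by norm_num)).hom.app D = 0 :=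
    hD _ ⟨A₀, hA₀, ⟨Iso.refl _⟩⟩ _
  have h1 : f⟦(1 : ℤ)⟧' = 0 := by
    have := h0 =≫ (shiftFunctorCompIsoId C (-1 : ℤ) (1 : ℤ) (by norm_num)).inv.app D
    simpa using this
  apply (shiftFunctor C (1 : ℤ)).map_injective
  rw [h1, Functor.map_zero]

lemma key {X Y X' Y' : Set C}
    (h : IsTStructure X Y) (h' : IsTStructure X' Y')
    (h1 : shiftSet X 1 ⊆ X') (h2 : X' ⊆ X) {H₀ : C} (hH : H₀ ∈ heart X Y) :
    ∃ (A B : C) (f : A ⟶ H₀) (g : H₀ ⟶ B) (hh : B ⟶ A⟦(1 : ℤ)⟧),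
      A ∈ heart X Y ∩ X' ∧ B ∈ heart X Y ∩ Y' ∧ Triangle.mk f g hh ∈ distTriang C := by
  obtain ⟨A, B, f, g, hh, hA', hB', hT⟩ := h'.dec H₀
  set T := Triangle.mk f g hh with hTdef
  -- B ∈ X : via the rotated triangle H₀ → B → A⟦1⟧
  have hBX : B ∈ X := by
    rw [← h.lp]
    intro Z hZ ψ
    have hH₀lp : H₀ ∈ leftPerp Y := by rw [h.lp]; exact hH.1
    obtain ⟨δ, hδ⟩ := Triangle.yoneda_exact₂ _ (rot_of_distTriang _ hT) ψ (hH₀lp Z hZ _)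
    have hA1 : A⟦(1 : ℤ)⟧ ∈ leftPerp Y := by
      rw [h.lp]; exact h.shift ⟨A, h2 hA', ⟨Iso.refl _⟩⟩
    rw [hδ, hA1 Z hZ δ]; exact comp_zero
  -- B ∈ Y⟦1⟧ : maps from X⟦1⟧ ⊆ X' into B ∈ Y' vanish
  have hBY1 : B ∈ shiftSet Y 1 := by
    apply mem_shiftY_of h
    intro P hP φ
    have hBrp : B ∈ rightPerp X' := by rw [h'.rp]; exact hB'
    exact hBrp P (h1 hP) φ
  -- A ∈ Y⟦1⟧ : via the inverse-rotated triangle B⟦-1⟧ → A → H₀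
  have hAY1 : A ∈ shiftSet Y 1 := by
    apply mem_shiftY_of h
    intro P hP φ
    have hφf : φ ≫ f = 0 := hom_zero_of_shiftY h hH.2 hP (φ ≫ f)
    obtain ⟨γ, hγ⟩ := Triangle.coyoneda_exact₂ _ (inv_rot_of_distTriang _ hT) φ hφf
    have hγ0 : γ = 0 := by
      have hP1 : P⟦(1 : ℤ)⟧ ∈ X' := h'.shift ⟨P, h1 hP, ⟨Iso.refl _⟩⟩
      have hBrp : B ∈ rightPerp X' := by rw [h'.rp]; exact hB'
      have h0 : γ⟦(1 : ℤ)⟧' ≫ (shiftFunctorCompIsoId C (-1 : ℤ) (1 : ℤ) (by norm_num)).hom.app B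
          = 0 := hBrp _ hP1 _
      have h1' : γ⟦(1 : ℤ)⟧' = 0 := by
        exact (cancel_mono ((shiftFunctorCompIsoId C (-1 : ℤ) (1 : ℤ) (by norm_num)).hom.app B)).1 (h0.trans (zero_comp).symm)
      apply (shiftFunctor C (1 : ℤ)).map_injective
      rw [h1', Functor.map_zero]
    rw [hγ, hγ0]; exact zero_comp
  exact ⟨A, B, f, g, hh, ⟨⟨h2 hA', hAY1⟩, hA'⟩, ⟨⟨hBX, hBY1⟩, hB'⟩, hT⟩

end Aux

/-- For a t-structure `(X, Y)` with heart `H` and an intermediate t-structure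
`(X', Y')` with `X⟦1⟧ ⊆ X' ⊆ X`, the pair `(H ∩ X', H ∩ Y')` is a torsion pair in `H`. -/
theorem statement0 (X Y X' Y' : Set C)
    (h : IsTStructure X Y) (h' : IsTStructure X' Y')
    (h1 : shiftSet X 1 ⊆ X') (h2 : X' ⊆ X) :
    IsHeartTorsionPair X Y (heart X Y ∩ X') (heart X Y ∩ Y') := by
  constructor
  · exact Set.inter_subset_left
  · exact Set.inter_subset_left
  · apply Set.Subset.antisymm
    · rintro D ⟨hD, hDrp⟩
      obtain ⟨A, B, f, g, hh, hA, hB, hT⟩ := key h h' h1 h2 hD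
      have hf0 : f = 0 := hDrp A hA f
      obtain ⟨r, hr⟩ := Triangle.yoneda_exact₂ _ hT (𝟙 D) ((comp_id _).trans hf0)
      refine ⟨hD, ?_⟩
      rw [← h'.rp]
      intro P hP φ
      have hφg : φ ≫ g = 0 := by
        have : B ∈ rightPerp X' := by rw [h'.rp]; exact hB.2
        exact this P hP _
      calc φ = φ ≫ 𝟙 D := by simp
        _ = (φ ≫ g) ≫ r := by rw [hr]; simp; exact (assoc _ _ _).symm
        _ = 0 := by rw [hφg]; exact zero_comp
    · rintro D ⟨hD, hDY'⟩
      refine ⟨hD, ?_⟩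
      rintro P ⟨hPheart, hPX'⟩ φ
      have : D ∈ rightPerp X' := by rw [h'.rp]; exact hDY'
      exact this P hPX' φ
  · apply Set.Subset.antisymm
    · rintro D ⟨hD, hDlp⟩
      obtain ⟨A, B, f, g, hh, hA, hB, hT⟩ := key h h' h1 h2 hD
      have hg0 : g = 0 := hDlp B hB g
      obtain ⟨s, hs⟩ := Triangle.coyoneda_exact₂ _ hT (𝟙 D) ((id_comp _).trans hg0)
      refine ⟨hD, ?_⟩
      rw [← h'.lp]
      intro Z hZ φ
      have hAφ : f ≫ φ = 0 := by
        have : A ∈ leftPerp Y' := by rw [h'.lp]; exact hA.2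
        exact this Z hZ _
      calc φ = 𝟙 D ≫ φ := by simp
        _ = s ≫ (f ≫ φ) := by rw [hs]; simp; exact assoc _ _ _
        _ = 0 := (congrArg (s ≫ ·) hAφ).trans comp_zero
    · rintro D ⟨hD, hDX'⟩
      refine ⟨hD, ?_⟩
      rintro Z ⟨hZheart, hZY'⟩ φ
      have : D ∈ leftPerp Y' := by rw [h'.lp]; exact hDX'
      exact this Z hZY' φ
  · intro H₀ hH₀
    obtain ⟨A, B, f, g, hh, hA, hB, hT⟩ := key h h' h1 h2 hH₀
    exact ⟨A, B, f, g, hh, hA, hB, hT⟩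


end Paper
end

section
/- Let D be a triangulated category with a t-structure (X, Y) with heart H, and let (T, F) be a torsion pair in H. Then the pair (X', Y') with X' the extension closure of T ∪ X[1] and Y' the extension closure of Y ∪ F is a t-structure on D satisfying X[1] ⊆ X' ⊆ X. Moreover X' = X[1] * T and Y' = F * Y. -/
open CategoryTheory Category Limits Pretriangulated

namespace Paper

variable {C : Type*} [Category C] [HasZeroObject C] [Preadditive C] [HasShift C ℤ]
  [∀ n : ℤ, (shiftFunctor C n).Additive] [Pretriangulated C]

/-! ### Auxiliary lemmas for statement 1 (HRS tilting) -/

attribute [-instance] CategoryTheory.catToReflQuiver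

section Statement1Aux
set_option linter.unusedSectionVars false

variable {X Y T F : Set C}

/-- Transport of hom-vanishing along isomorphisms. -/
lemma hom_zero_of_iso {A A' B B' : C} (eA : A ≅ A') (eB : B ≅ B')
    (hz : ∀ g : A ⟶ B, g = 0) (f : A' ⟶ B') : f = 0 := by
  have h1 : eA.hom ≫ f ≫ eB.inv = 0 := hz _
  have h2 : f = eA.inv ≫ (eA.hom ≫ f ≫ eB.inv) ≫ eB.hom := by simp
  rw [h2, h1]; simp

/-- Transport of hom-vanishing along the shift functor. -/
lemma shift_hom_zero {A B : C} (hz : ∀ g : A ⟶ B, g = 0)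
    (f : A⟦(1 : ℤ)⟧ ⟶ B⟦(1 : ℤ)⟧) : f = 0 := by
  obtain ⟨g, rfl⟩ := (shiftFunctor C (1 : ℤ)).map_surjective f
  rw [hz g, Functor.map_zero]

lemma mem_shiftSet_self {S : Set C} {A : C} (hA : A ∈ S) : A⟦(1 : ℤ)⟧ ∈ shiftSet S 1 :=
  ⟨A, hA, ⟨Iso.refl _⟩⟩

lemma shiftSet_iso {S : Set C} {A B : C} (e : A ≅ B) (hA : A ∈ shiftSet S 1) :
    B ∈ shiftSet S 1 := by
  obtain ⟨A₀, hA₀, ⟨e₀⟩⟩ := hA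
  exact ⟨A₀, hA₀, ⟨e.symm.trans e₀⟩⟩

lemma shiftSet_shift {S : Set C} (hS : shiftSet S 1 ⊆ S) {A : C} (hA : A ∈ shiftSet S 1) :
    A⟦(1 : ℤ)⟧ ∈ shiftSet S 1 := by
  obtain ⟨A₀, hA₀, ⟨e₀⟩⟩ := hA
  exact ⟨A₀⟦(1 : ℤ)⟧, hS (mem_shiftSet_self hA₀), ⟨(shiftFunctor C (1 : ℤ)).mapIso e₀⟩⟩

lemma leftPerp_iso {S : Set C} {A B : C} (e : A ≅ B) (hA : A ∈ leftPerp S) :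
    B ∈ leftPerp S := by
  intro s hs f
  have h1 : e.hom ≫ f = 0 := hA s hs _
  have h2 : f = e.inv ≫ (e.hom ≫ f) := by simp
  rw [h2, h1, comp_zero]

lemma rightPerp_iso {S : Set C} {A B : C} (e : A ≅ B) (hA : A ∈ rightPerp S) :
    B ∈ rightPerp S := by
  intro s hs f
  have h1 : f ≫ e.inv = 0 := hA s hs _
  have h2 : f = (f ≫ e.inv) ≫ e.hom := by simp
  rw [h2, h1, zero_comp]

lemma leftPerp_ext {S : Set C} {A E B : C} (f : A ⟶ E) (g : E ⟶ B) (hh : B ⟶ A⟦(1 : ℤ)⟧)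
    (hT : Triangle.mk f g hh ∈ distTriang C)
    (hA : A ∈ leftPerp S) (hB : B ∈ leftPerp S) : E ∈ leftPerp S := by
  intro s hs φ
  obtain ⟨ψ, hψ⟩ := Triangle.yoneda_exact₂ _ hT φ (hA s hs _)
  rw [hψ, hB s hs ψ]; exact comp_zero

lemma rightPerp_ext {S : Set C} {A E B : C} (f : A ⟶ E) (g : E ⟶ B) (hh : B ⟶ A⟦(1 : ℤ)⟧)
    (hT : Triangle.mk f g hh ∈ distTriang C)
    (hA : A ∈ rightPerp S) (hB : B ∈ rightPerp S) : E ∈ rightPerp S := by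
  intro s hs φ
  obtain ⟨ψ, hψ⟩ := Triangle.coyoneda_exact₂ _ hT φ (hB s hs _)
  rw [hψ, hA s hs ψ]; exact zero_comp

/-- Hom-vanishing from extension closures, contravariant version. -/
lemma extClosure_hom_zero_left {S : Set C} {d : C}
    (hz : ∀ s ∈ S, ∀ φ : s ⟶ d, φ = 0) :
    ∀ {A : C}, ExtClosure S A → ∀ φ : A ⟶ d, φ = 0 := by
  intro A hA
  induction hA with
  | of hs => exact hz _ hs
  | iso e _ ih =>
    intro φ
    have h2 : φ = e.inv ≫ (e.hom ≫ φ) := by simp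
    rw [h2, ih (e.hom ≫ φ), comp_zero]
  | ext f g hh hT _ _ ihA ihB =>
    intro φ
    obtain ⟨ψ, hψ⟩ := Triangle.yoneda_exact₂ _ hT φ (ihA _)
    rw [hψ, ihB ψ]; exact comp_zero

/-- Hom-vanishing from extension closures, covariant version. -/
lemma extClosure_hom_zero_right {S : Set C} {d : C}
    (hz : ∀ s ∈ S, ∀ φ : d ⟶ s, φ = 0) :
    ∀ {A : C}, ExtClosure S A → ∀ φ : d ⟶ A, φ = 0 := by
  intro A hA
  induction hA with
  | of hs => exact hz _ hs
  | iso e _ ih =>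
    intro φ
    have h2 : φ = (φ ≫ e.inv) ≫ e.hom := by simp
    rw [h2, ih (φ ≫ e.inv), zero_comp]
  | ext f g hh hT _ _ ihA ihB =>
    intro φ
    obtain ⟨ψ, hψ⟩ := Triangle.coyoneda_exact₂ _ hT φ (ihB _)
    rw [hψ, ihA ψ]; exact zero_comp

/-- Replacing the middle object of a distinguished triangle by an isomorphic one. -/
lemma distTriang_iso_mid {A B B' Z : C} (f : A ⟶ B) (g : B ⟶ Z) (hh : Z ⟶ A⟦(1 : ℤ)⟧)
    (hT : Triangle.mk f g hh ∈ distTriang C) (e : B ≅ B') :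
    Triangle.mk (f ≫ e.hom) (e.inv ≫ g) hh ∈ distTriang C := by
  refine isomorphic_distinguished _ hT _ ?_
  refine Triangle.isoMk _ _ (Iso.refl _) e.symm (Iso.refl _) ?_ ?_ ?_ <;> simp [Triangle.mk]

section TStr

variable (h : IsTStructure X Y)
include h

lemma homXY {x y : C} (hx : x ∈ X) (hy : y ∈ Y) (f : x ⟶ y) : f = 0 := by
  have hy' : y ∈ rightPerp X := by rw [h.rp]; exact hy
  exact hy' x hx f

lemma X_iso {A B : C} (e : A ≅ B) (hA : A ∈ X) : B ∈ X := by
  rw [← h.lp] at hA ⊢; exact leftPerp_iso e hA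

lemma Y_iso {A B : C} (e : A ≅ B) (hA : A ∈ Y) : B ∈ Y := by
  rw [← h.rp] at hA ⊢; exact rightPerp_iso e hA

lemma X_ext {A E B : C} (f : A ⟶ E) (g : E ⟶ B) (hh : B ⟶ A⟦(1 : ℤ)⟧)
    (hT : Triangle.mk f g hh ∈ distTriang C) (hA : A ∈ X) (hB : B ∈ X) : E ∈ X := by
  rw [← h.lp] at hA hB ⊢; exact leftPerp_ext f g hh hT hA hB

lemma memX_X1 {a : C} (ha : a ∈ shiftSet X 1) : a ∈ X := h.shift ha

lemma shift_mem_X {x : C} (hx : x ∈ X) : x⟦(1 : ℤ)⟧ ∈ X := h.shift (mem_shiftSet_self hx)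

/-- `Y` is stable under the negative shift. -/
lemma Yneg {y : C} (hy : y ∈ Y) : y⟦(-1 : ℤ)⟧ ∈ Y := by
  rw [← h.rp]
  intro x₀ hx₀ φ
  have h1 : (shiftFunctor C (1 : ℤ)).map φ ≫ ((shiftEquiv C (1 : ℤ)).counitIso.app y).hom = 0 :=
    homXY h (shift_mem_X h hx₀) hy _
  have h2 : (shiftFunctor C (1 : ℤ)).map φ = 0 := by
    exact ((Iso.eq_comp_inv ((shiftEquiv C (1 : ℤ)).counitIso.app y)).mpr rfl).trans
      ((congrArg (fun q => q ≫ ((shiftEquiv C (1 : ℤ)).counitIso.app y).inv) h1).trans zero_comp)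
  exact (shiftFunctor C (1 : ℤ)).map_injective (by rw [h2, Functor.map_zero])

lemma homX1Y1 {a b : C} (ha : a ∈ shiftSet X 1) (hb : b ∈ shiftSet Y 1) (φ : a ⟶ b) :
    φ = 0 := by
  obtain ⟨x₀, hx₀, ⟨eA⟩⟩ := ha
  obtain ⟨y₀, hy₀, ⟨eB⟩⟩ := hb
  exact hom_zero_of_iso eA.symm eB.symm (shift_hom_zero (homXY h hx₀ hy₀)) φ

/-- The shifted truncation triangle: every object is an extension of a `Y⟦1⟧`-object
by an `X⟦1⟧`-object. -/
lemma sdec (d : C) : ∃ (a b : C) (k : a ⟶ d) (p : d ⟶ b) (θ : b ⟶ a⟦(1 : ℤ)⟧),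
    a ∈ shiftSet X 1 ∧ b ∈ shiftSet Y 1 ∧ Triangle.mk k p θ ∈ distTriang C := by
  obtain ⟨A, B, f, g, hh, hA, hB, hT⟩ := h.dec (d⟦(-1 : ℤ)⟧)
  have hT3 : Triangle.mk (-f⟦(1 : ℤ)⟧') (-g⟦(1 : ℤ)⟧') (-hh⟦(1 : ℤ)⟧') ∈ distTriang C :=
    rot_of_distTriang _ (rot_of_distTriang _ (rot_of_distTriang _ hT))
  have hT4 := distTriang_iso_mid _ _ _ hT3 ((shiftEquiv C (1 : ℤ)).counitIso.app d)
  exact ⟨A⟦(1 : ℤ)⟧, B⟦(1 : ℤ)⟧, _, _, _, mem_shiftSet_self hA, mem_shiftSet_self hB, hT4⟩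

end TStr

section Both

variable (h : IsTStructure X Y) (htf : IsHeartTorsionPair X Y T F)
include h htf

lemma T_sub_X {t : C} (ht : t ∈ T) : t ∈ X := (htf.subT ht).1

lemma homTF {t f : C} (ht : t ∈ T) (hf : f ∈ F) (φ : t ⟶ f) : φ = 0 := by
  have hf' : f ∈ heart X Y ∩ rightPerp T := by rw [htf.rp]; exact hf
  exact hf'.2 t ht φ

lemma homX1F {a f : C} (ha : a ∈ shiftSet X 1) (hf : f ∈ F) (φ : a ⟶ f) : φ = 0 :=
  homX1Y1 h ha (htf.subF hf).2 φ

lemma homTY {t y : C} (ht : t ∈ T) (hy : y ∈ Y) (φ : t ⟶ y) : φ = 0 :=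
  homXY h (T_sub_X h htf ht) hy φ

lemma homX1Y {a y : C} (ha : a ∈ shiftSet X 1) (hy : y ∈ Y) (φ : a ⟶ y) : φ = 0 :=
  homXY h (memX_X1 h ha) hy φ

/-- Generator-level vanishing between the two new classes. -/
lemma genvan : ∀ s ∈ T ∪ shiftSet X 1, ∀ z ∈ Y ∪ F, ∀ φ : s ⟶ z, φ = 0 := by
  rintro s (hs | hs) z (hz | hz) φ
  · exact homTY h htf hs hz φ
  · exact homTF h htf hs hz φ
  · exact homX1Y h htf hs hz φ
  · exact homX1F h htf hs hz φ

/-- Objects left-perpendicular to `Y ∪ F` lie in `X⟦1⟧ * T`. -/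
lemma leftPerp_to_star {d : C}
    (hdY : ∀ y₀ ∈ Y, ∀ φ : d ⟶ y₀, φ = 0) (hdF : ∀ f₁ ∈ F, ∀ φ : d ⟶ f₁, φ = 0) :
    d ∈ star (shiftSet X 1) T := by
  obtain ⟨a, b, k, p, θ, ha, hb, hT⟩ := sdec h d
  have haX : a ∈ X := memX_X1 h ha
  have hbX : b ∈ X := by
    rw [← h.lp]
    intro y₀ hy₀ φ
    obtain ⟨ψ, hψ⟩ := Triangle.yoneda_exact₃ _ hT φ (hdY y₀ hy₀ _)
    rw [hψ, homXY h (shift_mem_X h haX) hy₀ ψ]; exact comp_zero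
  have hbF : b ∈ leftPerp F := by
    intro f₁ hf₁ φ
    obtain ⟨ψ, hψ⟩ := Triangle.yoneda_exact₃ _ hT φ (hdF f₁ hf₁ _)
    rw [hψ, homX1F h htf (shiftSet_shift h.shift ha) hf₁ ψ]; exact comp_zero
  have hbT : b ∈ T := by rw [← htf.lp]; exact ⟨⟨hbX, hb⟩, hbF⟩
  exact ⟨a, b, k, p, θ, ha, hbT, hT⟩

/-- Objects right-perpendicular to `T ∪ X⟦1⟧` lie in `F * Y`. -/
lemma rightPerp_to_star {d : C}
    (hdT : ∀ t₀ ∈ T, ∀ φ : t₀ ⟶ d, φ = 0)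
    (hdX1 : ∀ a ∈ shiftSet X 1, ∀ φ : a ⟶ d, φ = 0) :
    d ∈ star F Y := by
  obtain ⟨x, y, m, s, e, hx, hy, hT⟩ := h.dec d
  have hIR := inv_rot_of_distTriang _ hT
  have hyneg : y⟦(-1 : ℤ)⟧ ∈ Y := Yneg h hy
  have hxT : x ∈ rightPerp T := by
    intro t₀ ht₀ φ
    obtain ⟨ψ, hψ⟩ := Triangle.coyoneda_exact₂ _ hIR φ (hdT t₀ ht₀ (φ ≫ m))
    rw [hψ, homXY h (T_sub_X h htf ht₀) hyneg ψ]; exact zero_comp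
  have hxY1 : x ∈ shiftSet Y 1 := by
    refine ⟨x⟦(-1 : ℤ)⟧, ?_, ⟨((shiftEquiv C (1 : ℤ)).counitIso.app x).symm⟩⟩
    rw [← h.rp]
    intro x₀ hx₀ φ
    set I := (shiftEquiv C (1 : ℤ)).counitIso.app x
    have hψ0 : (shiftFunctor C (1 : ℤ)).map φ ≫ I.hom = 0 := by
      obtain ⟨ψ, hψ⟩ := Triangle.coyoneda_exact₂ _ hIR ((shiftFunctor C (1 : ℤ)).map φ ≫ I.hom)
        (hdX1 (x₀⟦(1 : ℤ)⟧) (mem_shiftSet_self hx₀) _)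
      exact hψ.trans (by rw [homXY h (shift_mem_X h hx₀) hyneg ψ]; exact zero_comp)
    have h2 : (shiftFunctor C (1 : ℤ)).map φ = 0 := by
      exact ((Iso.eq_comp_inv I).mpr rfl).trans
        ((congrArg (fun q => q ≫ I.inv) hψ0).trans zero_comp)
    exact (shiftFunctor C (1 : ℤ)).map_injective (by rw [h2, Functor.map_zero])
  have hxF : x ∈ F := by rw [← htf.rp]; exact ⟨⟨hx, hxY1⟩, hxT⟩
  exact ⟨x, y, m, s, e, hxF, hy, hT⟩

end Both

end Statement1Aux
section Statement1Main
set_option linter.unusedSectionVars false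

variable {X Y T F : Set C}
variable (h : IsTStructure X Y) (htf : IsHeartTorsionPair X Y T F)
include h htf

/-- The key construction: every object admits a distinguished triangle with first
term in `X⟦1⟧ * T` and third term in `F * Y`. -/
lemma main_dec (D : C) : ∃ (u v : C) (ν : u ⟶ D) (r : D ⟶ v) (dl : v ⟶ u⟦(1 : ℤ)⟧),
    u ∈ star (shiftSet X 1) T ∧ v ∈ star F Y ∧ Triangle.mk ν r dl ∈ distTriang C := by
  obtain ⟨x, y, m, s, e, hx, hy, hT0⟩ := h.dec D
  obtain ⟨a, h₀, k, p, θ, ha, hh₀Y1, hT1⟩ := sdec h x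
  have haX : a ∈ X := memX_X1 h ha
  have ha1X : a⟦(1 : ℤ)⟧ ∈ X := shift_mem_X h haX
  have hh₀X : h₀ ∈ X := by
    rw [← h.lp]
    intro y₀ hy₀ φ
    obtain ⟨ψ, hψ⟩ := Triangle.yoneda_exact₃ _ hT1 φ (homXY h hx hy₀ (p ≫ φ))
    rw [hψ, homXY h ha1X hy₀ ψ]; exact comp_zero
  obtain ⟨t, f, i, π, δ, ht, hf, hT2⟩ := htf.dec h₀ ⟨hh₀X, hh₀Y1⟩
  obtain ⟨c, w, l, hT5⟩ := distinguished_cocone_triangle (p ≫ π)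
  obtain ⟨ω₁, hω₁, -⟩ := complete_distinguished_triangle_morphism
    ((Triangle.mk k p θ).rotate) (Triangle.mk (p ≫ π) w l)
    (rot_of_distTriang _ hT1) hT5 (𝟙 x) π (id_comp _).symm
  change θ ≫ ω₁ = π ≫ w at hω₁
  -- hω₁ : θ ≫ ω₁ = π ≫ w
  have cvan : ∀ (Z : C), (∀ φ : a⟦(1 : ℤ)⟧ ⟶ Z, φ = 0) → (∀ φ : t⟦(1 : ℤ)⟧ ⟶ Z, φ = 0) →
      (∀ κ : x⟦(1 : ℤ)⟧ ⟶ Z, l ≫ κ = 0) → ∀ g : c ⟶ Z, g = 0 := by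
    intro Z hZ1 hZ2 hZ3 g
    have h1 : π ≫ w ≫ g = 0 := by
      rw [← assoc, ← hω₁]
      exact (assoc _ _ _).trans ((congrArg (θ ≫ ·) (hZ1 (ω₁ ≫ g))).trans comp_zero)
    obtain ⟨ψ, hψ⟩ := Triangle.yoneda_exact₃ _ hT2 (w ≫ g) h1
    have h2 : w ≫ g = 0 := by exact hψ.trans (by rw [hZ2 ψ]; exact comp_zero)
    obtain ⟨κ, hκ⟩ := Triangle.yoneda_exact₃ _ hT5 g h2
    rw [hκ]; exact hZ3 κ
  have hlx : l ≫ (p ≫ π)⟦(1 : ℤ)⟧' = 0 := by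
    have h9 := comp_distTriang_mor_zero₂₃ _ (rot_of_distTriang _ hT5)
    change l ≫ (-((p ≫ π)⟦(1 : ℤ)⟧')) = 0 at h9
    rw [Preadditive.comp_neg, neg_eq_zero] at h9
    exact h9
  -- Hom(c, y₀⟦1⟧) = 0
  have hcY : ∀ y₀ ∈ Y, ∀ g : c ⟶ y₀⟦(1 : ℤ)⟧, g = 0 := by
    intro y₀ hy₀ g
    refine cvan _ (shift_hom_zero (homXY h haX hy₀)) (shift_hom_zero (homTY h htf ht hy₀)) ?_ g
    intro κ
    rw [shift_hom_zero (homXY h hx hy₀) κ, comp_zero]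
  -- Hom(c, f₁⟦1⟧) = 0
  have hcF : ∀ f₁ ∈ F, ∀ g : c ⟶ f₁⟦(1 : ℤ)⟧, g = 0 := by
    intro f₁ hf₁ g
    refine cvan _ (shift_hom_zero (fun φ => homX1F h htf ha hf₁ φ))
      (shift_hom_zero (fun φ => homTF h htf ht hf₁ φ)) ?_ g
    intro κ
    obtain ⟨κ₀, rfl⟩ := (shiftFunctor C (1 : ℤ)).map_surjective κ
    obtain ⟨κ', hκ'⟩ := Triangle.yoneda_exact₂ _ hT1 κ₀ (homX1F h htf ha hf₁ (k ≫ κ₀))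
    change κ₀ = p ≫ κ' at hκ'
    have hR : ((Triangle.mk i π δ).rotate.rotate.rotate) ∈ distTriang C :=
      rot_of_distTriang _ (rot_of_distTriang _ (rot_of_distTriang _ hT2))
    have hcomp : (l ≫ p⟦(1 : ℤ)⟧') ≫ (-π⟦(1 : ℤ)⟧') = 0 := by
      rw [Preadditive.comp_neg, neg_eq_zero, assoc, ← Functor.map_comp]
      exact hlx
    obtain ⟨gt, hgt⟩ := Triangle.coyoneda_exact₂ _ hR (l ≫ p⟦(1 : ℤ)⟧') hcomp
    change l ≫ p⟦(1 : ℤ)⟧' = gt ≫ (-i⟦(1 : ℤ)⟧') at hgt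
    -- hgt : l ≫ p⟦1⟧' = gt ≫ -i⟦1⟧'
    have hiz : (-i⟦(1 : ℤ)⟧') ≫ κ'⟦(1 : ℤ)⟧' = 0 := by
      rw [Preadditive.neg_comp]
      exact neg_eq_zero.mpr (((shiftFunctor C (1 : ℤ)).map_comp i κ').symm.trans
        ((congrArg (shiftFunctor C (1 : ℤ)).map (homTF h htf ht hf₁ (i ≫ κ'))).trans
          ((shiftFunctor C (1 : ℤ)).map_zero _ _)))
    rw [hκ']
    exact (congrArg (l ≫ ·) ((shiftFunctor C (1 : ℤ)).map_comp p κ')).trans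
      ((assoc _ _ _).symm.trans ((congrArg (· ≫ κ'⟦(1 : ℤ)⟧') hgt).trans
        ((assoc _ _ _).trans ((congrArg (gt ≫ ·) hiz).trans comp_zero))))
  -- the fiber u := c⟦-1⟧ of x → f
  have hU : (Triangle.mk (p ≫ π) w l).invRotate ∈ distTriang C := inv_rot_of_distTriang _ hT5
  obtain ⟨lam, hlam⟩ : ∃ lam : c⟦(-1 : ℤ)⟧ ⟶ x,
      lam = (Triangle.mk (p ≫ π) w l).invRotate.mor₁ := ⟨_, rfl⟩
  have huvan : ∀ (Z : C), (∀ g : c ⟶ Z⟦(1 : ℤ)⟧, g = 0) → ∀ φ : c⟦(-1 : ℤ)⟧ ⟶ Z, φ = 0 := by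
    intro Z hZ φ
    have h2 : ((shiftEquiv C (1 : ℤ)).counitIso.app c).inv ≫ (shiftFunctor C (1 : ℤ)).map φ = 0 :=
      hZ _
    have h3 : (shiftFunctor C (1 : ℤ)).map φ = 0 := by
      exact (Iso.hom_inv_id_assoc ((shiftEquiv C (1 : ℤ)).counitIso.app c) _).symm.trans
        ((congrArg (fun q => ((shiftEquiv C (1 : ℤ)).counitIso.app c).hom ≫ q) h2).trans comp_zero)
    exact (shiftFunctor C (1 : ℤ)).map_injective (by rw [h3, Functor.map_zero])
  have huX : c⟦(-1 : ℤ)⟧ ∈ star (shiftSet X 1) T :=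
    leftPerp_to_star h htf (fun y₀ hy₀ φ => huvan y₀ (hcY y₀ hy₀) φ)
      (fun f₁ hf₁ φ => huvan f₁ (hcF f₁ hf₁) φ)
  obtain ⟨v, r, dl, hT4⟩ := distinguished_cocone_triangle (lam ≫ m)
  obtain ⟨σ₁, hσ₁, hσ₁'⟩ := complete_distinguished_triangle_morphism
    (Triangle.mk (lam ≫ m) r dl) (Triangle.mk m s e) hT4 hT0 lam (𝟙 D) (comp_id _)
  change dl ≫ lam⟦(1 : ℤ)⟧' = σ₁ ≫ e at hσ₁'
  -- hσ₁' : dl ≫ lam⟦1⟧' = σ₁ ≫ e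
  have hrot : (Triangle.mk (p ≫ π) w l).invRotate.rotate.mor₃ = -(lam⟦(1 : ℤ)⟧') := by
    rw [hlam]; rfl
  have hvvan : ∀ (c₀ : C), c₀ ∈ X → (∀ ψ : c₀ ⟶ f, ψ = 0) → ∀ g : c₀ ⟶ v, g = 0 := by
    intro c₀ hc₀X hc₀f g
    have hgσ : g ≫ σ₁ = 0 := homXY h hc₀X hy _
    have hdlz : g ≫ dl ≫ lam⟦(1 : ℤ)⟧' = 0 := by
      rw [hσ₁']; exact (assoc _ _ _).symm.trans ((congrArg (· ≫ e) hgσ).trans zero_comp)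
    have ho : (g ≫ dl) ≫ (Triangle.mk (p ≫ π) w l).invRotate.rotate.mor₃ = 0 := by
      rw [hrot]
      exact (Preadditive.comp_neg _ _).trans (neg_eq_zero.mpr ((assoc _ _ _).trans hdlz))
    obtain ⟨ψ, hψ⟩ := Triangle.coyoneda_exact₃ _ (rot_of_distTriang _ hU) (g ≫ dl) ho
    have ho0 : g ≫ dl = 0 := by exact hψ.trans (by rw [hc₀f ψ]; exact zero_comp)
    obtain ⟨gD, hgD⟩ := Triangle.coyoneda_exact₃ _ hT4 g ho0
    change g = gD ≫ r at hgD
    have hgs : gD ≫ s = 0 := homXY h hc₀X hy _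
    obtain ⟨gx, hgx⟩ := Triangle.coyoneda_exact₂ _ hT0 gD hgs
    change gD = gx ≫ m at hgx
    have hgf : gx ≫ (Triangle.mk (p ≫ π) w l).invRotate.mor₂ = 0 := hc₀f _
    obtain ⟨gu, hgu⟩ := Triangle.coyoneda_exact₂ _ hU gx hgf
    rw [← hlam] at hgu
    have h0 : lam ≫ m ≫ r = 0 := by
      have h9 := comp_distTriang_mor_zero₁₂ _ hT4
      change (lam ≫ m) ≫ r = 0 at h9
      rw [assoc] at h9
      exact h9
    rw [hgD, hgx, hgu]
    exact ((assoc _ _ _).trans (assoc _ _ _)).trans ((congrArg (gu ≫ ·) h0).trans comp_zero)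
  have hvT : ∀ t₀ ∈ T, ∀ g : t₀ ⟶ v, g = 0 := fun t₀ ht₀ g =>
    hvvan t₀ (T_sub_X h htf ht₀) (fun ψ => homTF h htf ht₀ hf ψ) g
  have hvX1 : ∀ a' ∈ shiftSet X 1, ∀ g : a' ⟶ v, g = 0 := fun a' ha' g =>
    hvvan a' (memX_X1 h ha') (fun ψ => homX1F h htf ha' hf ψ) g
  exact ⟨c⟦(-1 : ℤ)⟧, v, lam ≫ m, r, dl, huX, rightPerp_to_star h htf hvT hvX1, hT4⟩

lemma ECX_sub_X : extClosure (T ∪ shiftSet X 1) ⊆ X := by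
  intro d hd
  induction hd with
  | of hs => rcases hs with hs | hs; exacts [T_sub_X h htf hs, memX_X1 h hs]
  | iso e _ ih => exact X_iso h e ih
  | ext f g hh hT _ _ ihA ihB => exact X_ext h f g hh hT ihA ihB

lemma EC_shift : ∀ {A : C}, ExtClosure (T ∪ shiftSet X 1) A →
    ExtClosure (T ∪ shiftSet X 1) (A⟦(1 : ℤ)⟧) := by
  intro A hA
  induction hA with
  | of hs =>
    rcases hs with hs | hs
    · exact .of (Or.inr (mem_shiftSet_self (T_sub_X h htf hs)))
    · exact .of (Or.inr (shiftSet_shift h.shift hs))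
  | iso e _ ih => exact .iso ((shiftFunctor C (1 : ℤ)).mapIso e) ih
  | ext f g hh hT _ _ ihA ihB =>
    have hT3 : Triangle.mk (-f⟦(1 : ℤ)⟧') (-g⟦(1 : ℤ)⟧') (-hh⟦(1 : ℤ)⟧') ∈ distTriang C :=
      rot_of_distTriang _ (rot_of_distTriang _ (rot_of_distTriang _ hT))
    exact .ext _ _ _ hT3 ihA ihB

end Statement1Main

section Statement1Sub
set_option linter.unusedSectionVars false
variable {X Y T F : Set C}

lemma starXT_sub_EC : star (shiftSet X 1) T ⊆ extClosure (T ∪ shiftSet X 1) := by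
  rintro d ⟨A, B, f, g, hh, hA, hB, hT⟩
  exact ExtClosure.ext f g hh hT (.of (Or.inr hA)) (.of (Or.inl hB))

lemma starFY_sub_EC : star F Y ⊆ extClosure (Y ∪ F) := by
  rintro d ⟨A, B, f, g, hh, hA, hB, hT⟩
  exact ExtClosure.ext f g hh hT (.of (Or.inr hA)) (.of (Or.inl hB))

end Statement1Sub


/-- The HRS-tilt of a t-structure `(X, Y)` at a torsion pair `(T, F)` in its
heart is a t-structure `(X', Y') = (⟨T, X⟦1⟧⟩, ⟨Y, F⟩)` with `X⟦1⟧ ⊆ X' ⊆ X`; moreover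
`X' = X⟦1⟧ * T` and `Y' = F * Y`. -/
theorem statement1 (X Y T F : Set C)
    (h : IsTStructure X Y) (htf : IsHeartTorsionPair X Y T F) :
    IsTStructure (extClosure (T ∪ shiftSet X 1)) (extClosure (Y ∪ F)) ∧
    shiftSet X 1 ⊆ extClosure (T ∪ shiftSet X 1) ∧
    extClosure (T ∪ shiftSet X 1) ⊆ X ∧
    extClosure (T ∪ shiftSet X 1) = star (shiftSet X 1) T ∧
    extClosure (Y ∪ F) = star F Y := by
  have hsub2 : shiftSet X 1 ⊆ extClosure (T ∪ shiftSet X 1) :=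
    fun a ha => ExtClosure.of (Or.inr ha)
  have hTsub : T ⊆ extClosure (T ∪ shiftSet X 1) := fun t ht => ExtClosure.of (Or.inl ht)
  have hYsub : Y ⊆ extClosure (Y ∪ F) := fun y hy => ExtClosure.of (Or.inl hy)
  have hFsub : F ⊆ extClosure (Y ∪ F) := fun f hf => ExtClosure.of (Or.inr hf)
  have hvan : ∀ {A : C}, A ∈ extClosure (T ∪ shiftSet X 1) →
      ∀ {B : C}, B ∈ extClosure (Y ∪ F) → ∀ φ : A ⟶ B, φ = 0 := by
    intro A hA B hB φ
    refine extClosure_hom_zero_left (fun s hs ψ => ?_) hA φ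
    exact extClosure_hom_zero_right (fun z hz χ => genvan h htf s hs z hz χ) hB ψ
  refine ⟨?_, hsub2, ECX_sub_X h htf, ?_, ?_⟩
  · refine ⟨?_, ?_, ?_, ?_⟩
    · ext d
      constructor
      · intro hd
        exact starFY_sub_EC (rightPerp_to_star h htf
          (fun t₀ ht₀ φ => hd t₀ (hTsub ht₀) φ) (fun a ha φ => hd a (hsub2 ha) φ))
      · intro hd A hA φ
        exact hvan hA hd φ
    · ext d
      constructor
      · intro hd
        exact starXT_sub_EC (leftPerp_to_star h htf
          (fun y₀ hy₀ φ => hd y₀ (hYsub hy₀) φ) (fun f₁ hf₁ φ => hd f₁ (hFsub hf₁) φ))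
      · intro hd B hB φ
        exact hvan hd hB φ
    · intro D
      obtain ⟨u, v, ν, r, dl, hu, hv, hT⟩ := main_dec h htf D
      exact ⟨u, v, ν, r, dl, starXT_sub_EC hu, starFY_sub_EC hv, hT⟩
    · rintro d ⟨A, hA, ⟨e⟩⟩
      exact ExtClosure.iso e.symm (EC_shift h htf hA)
  · refine Set.Subset.antisymm (fun d hd => ?_) starXT_sub_EC
    refine leftPerp_to_star h htf (fun y₀ hy₀ φ => ?_) (fun f₁ hf₁ φ => ?_)
    · exact hvan hd (hYsub hy₀) φ
    · exact hvan hd (hFsub hf₁) φ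
  · refine Set.Subset.antisymm (fun d hd => ?_) starFY_sub_EC
    refine rightPerp_to_star h htf (fun t₀ ht₀ φ => ?_) (fun a ha φ => ?_)
    · exact hvan (hTsub ht₀) hd φ
    · exact hvan (hsub2 ha) hd φ

end Paper
end

section
/- Let (X, Y) be a bounded t-structure on a triangulated category D whose heart H has extension closure generated by finitely many objects X_1, ..., X_t (i.e. H is the extension closure of {X_1,...,X_t}), and let (X', Y') be any bounded t-structure on D. Then there exist integers m ≥ n such that X[m] ⊆ X' ⊆ X[n]. -/
open CategoryTheory Category Limits Pretriangulated

namespace Paper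

variable {C : Type*} [Category C] [HasZeroObject C] [Preadditive C] [HasShift C ℤ]
  [∀ n : ℤ, (shiftFunctor C n).Additive] [Pretriangulated C]

section Aux

open ZeroObject

variable {C : Type*} [Category C] [HasZeroObject C] [Preadditive C] [HasShift C ℤ]
  [∀ n : ℤ, (shiftFunctor C n).Additive] [Pretriangulated C]

/-- A class of objects closed under isomorphisms and extensions. -/
structure ExtIso (S : Set C) : Prop where
  iso : ∀ {A B : C}, (A ≅ B) → A ∈ S → B ∈ S
  ext : ∀ T ∈ distTriang C, T.obj₁ ∈ S → T.obj₃ ∈ S → T.obj₂ ∈ S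

/-- A convenient iso `A⟦a⟧⟦b⟧ ≅ A⟦c⟧` when `a + b = c`. -/
noncomputable def shAdd (A : C) (a b c : ℤ) (h : a + b = c) : A⟦a⟧⟦b⟧ ≅ A⟦c⟧ :=
  ((shiftFunctorAdd' C a b c h).app A).symm

lemma extIso_rightPerp (S : Set C) : ExtIso (rightPerp S) where
  iso := by
    intro A B e hA s hs f
    have h0 : f ≫ e.inv = 0 := hA s hs (f ≫ e.inv)
    calc f = (f ≫ e.inv) ≫ e.hom := by simp
    _ = 0 := by rw [h0, zero_comp]
  ext := by
    intro T hT h1 h3 s hs f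
    have h2 : f ≫ T.mor₂ = 0 := h3 s hs _
    obtain ⟨g, hg⟩ := Triangle.coyoneda_exact₂ T hT f h2
    rw [hg, h1 s hs g, zero_comp]

lemma extIso_leftPerp (S : Set C) : ExtIso (leftPerp S) where
  iso := by
    intro A B e hA s hs f
    have h0 : e.hom ≫ f = 0 := hA s hs (e.hom ≫ f)
    calc f = e.inv ≫ e.hom ≫ f := by simp
    _ = 0 := by rw [h0, comp_zero]
  ext := by
    intro T hT h1 h3 s hs f
    have h2 : T.mor₁ ≫ f = 0 := h1 s hs _
    obtain ⟨g, hg⟩ := Triangle.yoneda_exact₂ T hT f h2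
    rw [hg, h3 s hs g, comp_zero]

lemma extIso_shiftSet {S : Set C} (hS : ExtIso S) (n : ℤ) : ExtIso (shiftSet S n) where
  iso := by
    rintro A B e ⟨a, ha, ⟨e'⟩⟩
    exact ⟨a, ha, ⟨e.symm ≪≫ e'⟩⟩
  ext := by
    intro T hT h1 h3
    obtain ⟨p, hp, ⟨e1⟩⟩ := h1
    obtain ⟨q, hq, ⟨e3⟩⟩ := h3
    have hT' := Triangle.shift_distinguished T hT (-n)
    set T' := (CategoryTheory.shiftFunctor (Triangle C) (-n)).obj T with hT'def
    have m1 : T'.obj₁ ∈ S := hS.iso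
      (((shiftFunctor C (-n)).mapIso e1 ≪≫ shAdd p n (-n) 0 (by ring) ≪≫
        (shiftFunctorZero C ℤ).app p).symm) hp
    have m3 : T'.obj₃ ∈ S := hS.iso
      (((shiftFunctor C (-n)).mapIso e3 ≪≫ shAdd q n (-n) 0 (by ring) ≪≫
        (shiftFunctorZero C ℤ).app q).symm) hq
    have m2 : T'.obj₂ ∈ S := hS.ext T' hT' m1 m3
    exact ⟨T'.obj₂, m2, ⟨(shAdd T.obj₂ (-n) n 0 (by ring) ≪≫
      (shiftFunctorZero C ℤ).app _).symm⟩⟩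

lemma extClosure_subset_of_extIso {S T : Set C} (hST : S ⊆ T) (hT : ExtIso T) :
    extClosure S ⊆ T := by
  intro D hD
  induction hD with
  | of h => exact hST h
  | iso e _ ih => exact hT.iso e ih
  | ext f g w hTr _ _ ihA ihB => exact hT.ext _ hTr ihA ihB

lemma extIso_extClosure (S : Set C) : ExtIso (extClosure S) where
  iso := fun e h => ExtClosure.iso e h
  ext := fun T hT h1 h3 => ExtClosure.ext T.mor₁ T.mor₂ T.mor₃ hT h1 h3

lemma middle_iso_dist (T : Triangle C) (hT : T ∈ distTriang C) {D' : C} (e : T.obj₂ ≅ D') :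
    Triangle.mk (T.mor₁ ≫ e.hom) (e.inv ≫ T.mor₂) T.mor₃ ∈ distTriang C := by
  refine isomorphic_distinguished _ hT _ ?_
  refine Triangle.isoMk _ _ (Iso.refl _) e.symm (Iso.refl _) ?_ ?_ ?_ <;> simp [Triangle.mk]

lemma shift_mem_extClosure {S : Set C} {D : C} (hD : D ∈ extClosure S) (n : ℤ) :
    D⟦n⟧ ∈ extClosure (shiftSet S n) := by
  induction hD with
  | of h => exact ExtClosure.of ⟨_, h, ⟨Iso.refl _⟩⟩
  | iso e _ ih => exact ExtClosure.iso ((shiftFunctor C n).mapIso e) ih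
  | ext f g w hTr hA hB ihA ihB =>
    exact (extIso_extClosure _).ext _ (Triangle.shift_distinguished _ hTr n) ihA ihB

section TStr

variable {X Y : Set C} (h : IsTStructure X Y)
include h

lemma IsTStructure.extIsoX : ExtIso X := h.lp ▸ extIso_leftPerp Y

lemma IsTStructure.extIsoY : ExtIso Y := h.rp ▸ extIso_rightPerp X

lemma IsTStructure.homZero {A B : C} (hA : A ∈ X) (hB : B ∈ Y) (f : A ⟶ B) : f = 0 := by
  rw [← h.lp] at hA
  exact hA B hB f

lemma IsTStructure.shiftX {A : C} (hA : A ∈ X) (n : ℤ) (hn : 0 ≤ n) : A⟦n⟧ ∈ X := by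
  obtain ⟨k, rfl⟩ := Int.eq_ofNat_of_zero_le hn
  induction k with
  | zero => exact h.extIsoX.iso ((shiftFunctorZero C ℤ).app A).symm hA
  | succ k ih =>
    have h1 : A⟦(k : ℤ)⟧⟦(1 : ℤ)⟧ ∈ X :=
      h.shift ⟨A⟦(k : ℤ)⟧, ih (by positivity), ⟨Iso.refl _⟩⟩
    exact h.extIsoX.iso (shAdd A (k : ℤ) 1 ((k + 1 : ℕ) : ℤ) (by push_cast; ring)) h1

lemma IsTStructure.shiftY {A : C} (hA : A ∈ Y) (n : ℤ) (hn : n ≤ 0) : A⟦n⟧ ∈ Y := by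
  rw [← h.rp]
  intro s hs f
  have h1 : s⟦-n⟧ ∈ X := h.shiftX hs (-n) (by omega)
  set e := shAdd A n (-n) 0 (by ring) ≪≫ (shiftFunctorZero C ℤ).app A
  have h2 : (shiftFunctor C (-n)).map f ≫ e.hom = 0 := h.homZero h1 hA _
  apply (shiftFunctor C (-n)).map_injective
  rw [Functor.map_zero]
  calc (shiftFunctor C (-n)).map f
      = ((shiftFunctor C (-n)).map f ≫ e.hom) ≫ e.inv := by simp
    _ = 0 := by rw [h2, zero_comp]

lemma IsTStructure.shiftSetX_anti {a b : ℤ} (hab : a ≤ b) :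
    shiftSet X b ⊆ shiftSet X a := by
  rintro z ⟨x, hx, ⟨e⟩⟩
  exact ⟨x⟦b - a⟧, h.shiftX hx _ (by omega), ⟨e ≪≫ (shAdd x (b - a) a b (by ring)).symm⟩⟩

lemma IsTStructure.shiftSetY_mono {a b : ℤ} (hab : a ≤ b) :
    shiftSet Y a ⊆ shiftSet Y b := by
  rintro z ⟨y, hy, ⟨e⟩⟩
  exact ⟨y⟦a - b⟧, h.shiftY hy _ (by omega), ⟨e ≪≫ (shAdd y (a - b) b a (by ring)).symm⟩⟩

lemma IsTStructure.zeroX : (0 : C) ∈ X := by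
  rw [← h.lp]
  intro b hb f
  exact (isZero_zero C).eq_of_src f 0

lemma IsTStructure.zeroY : (0 : C) ∈ Y := by
  rw [← h.rp]
  intro a ha f
  exact (isZero_zero C).eq_of_tgt f 0

lemma IsTStructure.isZero_shift_zero (n : ℤ) : IsZero ((0 : C)⟦n⟧) := by
  rw [IsZero.iff_id_eq_zero]
  calc 𝟙 ((0 : C)⟦n⟧) = (shiftFunctor C n).map (𝟙 (0 : C)) := by
        rw [CategoryTheory.Functor.map_id]
    _ = (shiftFunctor C n).map 0 := by rw [(isZero_zero C).eq_of_src (𝟙 (0 : C)) 0]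
    _ = 0 := CategoryTheory.Functor.map_zero _ _ _

lemma IsTStructure.zeroHeart : (0 : C) ∈ heart X Y :=
  ⟨h.zeroX, ⟨0, h.zeroY, ⟨((isZero_zero C).iso (h.isZero_shift_zero 1))⟩⟩⟩

lemma IsTStructure.isZero_of_X_of_shY {D : C} (hDX : D ∈ X) {m : ℤ} (hm : m ≤ 0)
    (hDY : D ∈ shiftSet Y m) : IsZero D := by
  obtain ⟨y, hy, ⟨e⟩⟩ := hDY
  have h1 : y⟦m⟧ ∈ Y := h.shiftY hy m hm
  have h2 : e.hom = 0 := h.homZero hDX h1 e.hom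
  rw [IsZero.iff_id_eq_zero, ← e.hom_inv_id, h2, zero_comp]

lemma IsTStructure.isZero_of_Y_of_shX {D : C} (hDY : D ∈ Y) {m : ℤ} (hm : 0 ≤ m)
    (hDX : D ∈ shiftSet X m) : IsZero D := by
  obtain ⟨x, hx, ⟨e⟩⟩ := hDX
  have h1 : x⟦m⟧ ∈ X := h.shiftX hx m hm
  have h2 : e.inv = 0 := h.homZero h1 hDY e.inv
  rw [IsZero.iff_id_eq_zero, ← e.hom_inv_id, h2, comp_zero]

/-- Key lemma: objects of `X` bounded by `Y⟦j⟧` lie in the extension closure of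
nonnegative shifts of the heart. -/
lemma IsTStructure.mem_extClosure_shiftsGe :
    ∀ (j : ℕ) (D : C), D ∈ X → D ∈ shiftSet Y (j : ℤ) →
      D ∈ extClosure (shiftsGe (heart X Y) 0) := by
  intro j
  induction j with
  | zero =>
    intro D hDX hDY
    have hz : IsZero D := h.isZero_of_X_of_shY hDX (by simp) hDY
    exact ExtClosure.of ⟨0, h.zeroHeart, 0, le_refl _, ⟨hz.iso (h.isZero_shift_zero 0)⟩⟩
  | succ j ih =>
    intro D hDX hDY
    obtain ⟨y, hy, ⟨ey⟩⟩ := hDY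
    obtain ⟨A, B, f, g, w, hA, hB, hT⟩ := h.dec (D⟦(-1 : ℤ)⟧)
    -- A ∈ shiftSet Y j via the inverse rotation of the triangle
    have hTinv := inv_rot_of_distTriang _ hT
    have hSj : ExtIso (shiftSet Y (j : ℤ)) := extIso_shiftSet h.extIsoY _
    have hB1 : (Triangle.mk f g w).invRotate.obj₁ ∈ shiftSet Y (j : ℤ) :=
      ⟨B⟦(-1 - (j : ℤ))⟧, h.shiftY hB _ (by omega),
        ⟨(shAdd B (-1 - (j : ℤ)) (j : ℤ) (-1) (by ring)).symm⟩⟩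
    have hD1 : (Triangle.mk f g w).invRotate.obj₃ ∈ shiftSet Y (j : ℤ) :=
      ⟨y, hy, ⟨(shiftFunctor C (-1)).mapIso ey ≪≫
        shAdd y ((j + 1 : ℕ) : ℤ) (-1) (j : ℤ) (by push_cast; ring)⟩⟩
    have hAj : A ∈ shiftSet Y (j : ℤ) := hSj.ext _ hTinv hB1 hD1
    have hAE : A ∈ extClosure (shiftsGe (heart X Y) 0) := ih A hA hAj
    -- build the triangle A⟦1⟧ ⟶ D ⟶ B⟦1⟧
    have hT1 := Triangle.shift_distinguished (Triangle.mk f g w) hT 1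
    set T1 := (CategoryTheory.shiftFunctor (Triangle C) (1 : ℤ)).obj (Triangle.mk f g w)
      with hT1def
    set e : (D⟦(-1 : ℤ)⟧)⟦(1 : ℤ)⟧ ≅ D :=
      shAdd D (-1) 1 0 (by ring) ≪≫ (shiftFunctorZero C ℤ).app D with hedef
    have hT2 : Triangle.mk (T1.mor₁ ≫ e.hom) (e.inv ≫ T1.mor₂) T1.mor₃ ∈ distTriang C :=
      middle_iso_dist T1 hT1 e
    set T2 : Triangle C := Triangle.mk (T1.mor₁ ≫ e.hom) (e.inv ≫ T1.mor₂) T1.mor₃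
      with hT2def
    -- B⟦1⟧ lies in the heart
    have hB1X : B⟦(1 : ℤ)⟧ ∈ X := by
      rw [← h.lp]
      intro F hF φ
      have h0 : T2.mor₂ ≫ φ = 0 := h.homZero hDX hF _
      obtain ⟨ψ, hψ⟩ := Triangle.yoneda_exact₃ T2 hT2 φ h0
      have hA2 : (A⟦(1 : ℤ)⟧)⟦(1 : ℤ)⟧ ∈ X :=
        h.extIsoX.iso (shAdd A 1 1 2 (by ring)).symm (h.shiftX hA 2 (by omega))
      have hψ0 : ψ = 0 := h.homZero hA2 hF ψ
      rw [hψ, hψ0, comp_zero]; rfl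
    have hB1H : B⟦(1 : ℤ)⟧ ∈ heart X Y := ⟨hB1X, ⟨B, hB, ⟨Iso.refl _⟩⟩⟩
    have hBE : B⟦(1 : ℤ)⟧ ∈ extClosure (shiftsGe (heart X Y) 0) :=
      ExtClosure.of ⟨_, hB1H, 0, le_refl _, ⟨((shiftFunctorZero C ℤ).app _).symm⟩⟩
    have hAE1 : A⟦(1 : ℤ)⟧ ∈ extClosure (shiftsGe (heart X Y) 0) := by
      refine extClosure_subset_of_extIso ?_ (extIso_extClosure _)
        (shift_mem_extClosure hAE 1)
      rintro z ⟨w', ⟨h₀, hh₀, i, hi, ⟨e1⟩⟩, ⟨e2⟩⟩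
      exact ExtClosure.of ⟨h₀, hh₀, i + 1, by omega,
        ⟨e2 ≪≫ (shiftFunctor C 1).mapIso e1 ≪≫ shAdd h₀ i 1 (i + 1) rfl⟩⟩
    exact (extIso_extClosure _).ext T2 hT2 hAE1 hBE

/-- Key dual lemma: objects of `Y` bounded by `X⟦-j⟧` lie in the extension closure of
negative shifts of the heart. -/
lemma IsTStructure.mem_extClosure_shiftsLe :
    ∀ (j : ℕ) (D : C), D ∈ Y → D ∈ shiftSet X (-(j : ℤ)) →
      D ∈ extClosure (shiftsLe (heart X Y) (-1)) := by
  intro j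
  induction j with
  | zero =>
    intro D hDY hDX
    have hz : IsZero D := h.isZero_of_Y_of_shX hDY (by simp) hDX
    exact ExtClosure.of ⟨0, h.zeroHeart, -1, le_refl _, ⟨hz.iso (h.isZero_shift_zero (-1))⟩⟩
  | succ j ih =>
    intro D hDY hDX
    have hcast : (-((j + 1 : ℕ) : ℤ)) = -(j : ℤ) - 1 := by push_cast; ring
    rw [hcast] at hDX
    obtain ⟨A₀, B₀, f, g, w, hA₀, hB₀, hT⟩ := h.dec (D⟦(j : ℤ)⟧)
    -- shift the triangle by -j and fix the middle term
    have hT1 := Triangle.shift_distinguished (Triangle.mk f g w) hT (-(j : ℤ))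
    set T1 := (CategoryTheory.shiftFunctor (Triangle C) (-(j : ℤ))).obj (Triangle.mk f g w)
      with hT1def
    set e : (D⟦(j : ℤ)⟧)⟦(-(j : ℤ))⟧ ≅ D :=
      shAdd D (j : ℤ) (-(j : ℤ)) 0 (by ring) ≪≫ (shiftFunctorZero C ℤ).app D with hedef
    have hT2 : Triangle.mk (T1.mor₁ ≫ e.hom) (e.inv ≫ T1.mor₂) T1.mor₃ ∈ distTriang C :=
      middle_iso_dist T1 hT1 e
    set T2 : Triangle C := Triangle.mk (T1.mor₁ ≫ e.hom) (e.inv ≫ T1.mor₂) T1.mor₃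
      with hT2def
    -- A = A₀⟦-j⟧ belongs to Y
    have hAY : A₀⟦(-(j : ℤ))⟧ ∈ Y := by
      rw [← h.rp]
      intro s hs φ
      have hTinv := inv_rot_of_distTriang _ hT2
      have h0 : φ ≫ T2.invRotate.mor₂ = 0 := h.homZero hs hDY _
      obtain ⟨ψ, hψ⟩ := Triangle.coyoneda_exact₂ T2.invRotate hTinv φ h0
      have hBm : (B₀⟦(-(j : ℤ))⟧)⟦(-1 : ℤ)⟧ ∈ Y :=
        h.extIsoY.iso (shAdd B₀ (-(j : ℤ)) (-1) (-(j : ℤ) - 1) (by ring)).symm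
          (h.shiftY hB₀ _ (by omega))
      have hψ0 : ψ = 0 := h.homZero hs hBm ψ
      rw [hψ, hψ0, zero_comp]; rfl
    have hAX : A₀⟦(-(j : ℤ))⟧ ∈ shiftSet X (-(j : ℤ)) := ⟨A₀, hA₀, ⟨Iso.refl _⟩⟩
    have hAE : A₀⟦(-(j : ℤ))⟧ ∈ extClosure (shiftsLe (heart X Y) (-1)) := ih _ hAY hAX
    -- B = B₀⟦-j⟧ belongs to X⟦-j-1⟧, hence to heart⟦-j-1⟧
    have hDsh : D ∈ shiftSet X (-(j : ℤ) - 1) := hDX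
    have hA1sh : (A₀⟦(-(j : ℤ))⟧)⟦(1 : ℤ)⟧ ∈ shiftSet X (-(j : ℤ) - 1) :=
      ⟨A₀⟦(2 : ℤ)⟧, h.shiftX hA₀ 2 (by omega),
        ⟨shAdd A₀ (-(j : ℤ)) 1 (-(j : ℤ) + 1) (by ring) ≪≫
          (shAdd A₀ 2 (-(j : ℤ) - 1) (-(j : ℤ) + 1) (by ring)).symm⟩⟩
    have hBsh : B₀⟦(-(j : ℤ))⟧ ∈ shiftSet X (-(j : ℤ) - 1) :=
      (extIso_shiftSet h.extIsoX _).ext _ (rot_of_distTriang _ hT2) hDsh hA1sh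
    obtain ⟨x, hx, ⟨e₁⟩⟩ := hBsh
    have hxY1 : x ∈ shiftSet Y 1 := by
      refine ⟨B₀, hB₀, ⟨?_⟩⟩
      calc x ≅ x⟦(0 : ℤ)⟧ := ((shiftFunctorZero C ℤ).app x).symm
        _ ≅ (x⟦(-(j : ℤ) - 1)⟧)⟦((j : ℤ) + 1)⟧ :=
            (shAdd x (-(j : ℤ) - 1) ((j : ℤ) + 1) 0 (by ring)).symm
        _ ≅ (B₀⟦(-(j : ℤ))⟧)⟦((j : ℤ) + 1)⟧ :=
            (shiftFunctor C ((j : ℤ) + 1)).mapIso e₁.symm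
        _ ≅ B₀⟦(1 : ℤ)⟧ := shAdd B₀ (-(j : ℤ)) ((j : ℤ) + 1) 1 (by ring)
    have hxH : x ∈ heart X Y := ⟨hx, hxY1⟩
    have hBE : B₀⟦(-(j : ℤ))⟧ ∈ extClosure (shiftsLe (heart X Y) (-1)) :=
      ExtClosure.of ⟨x, hxH, -(j : ℤ) - 1, by omega, ⟨e₁⟩⟩
    exact (extIso_extClosure _).ext T2 hT2 hAE hBE

lemma IsTStructure.X_subset (hb : IsBounded X Y) :
    X ⊆ extClosure (shiftsGe (heart X Y) 0) := by
  intro D hD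
  obtain ⟨m, hm⟩ := hb.2 D
  have hm' : D ∈ shiftSet Y (max m 0) := h.shiftSetY_mono (le_max_left m 0) hm
  have hcast : (((max m 0).toNat : ℕ) : ℤ) = max m 0 := Int.toNat_of_nonneg (le_max_right m 0)
  rw [← hcast] at hm'
  exact h.mem_extClosure_shiftsGe _ D hD hm'

lemma IsTStructure.Y_subset (hb : IsBounded X Y) :
    Y ⊆ extClosure (shiftsLe (heart X Y) (-1)) := by
  intro D hD
  obtain ⟨m, hm⟩ := hb.1 D
  have hm' : D ∈ shiftSet X (min m 0) := h.shiftSetX_anti (min_le_left m 0) hm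
  have hcast : (-(((-(min m 0)).toNat : ℕ) : ℤ)) = min m 0 := by
    rw [Int.toNat_of_nonneg (by omega)]; ring
  rw [← hcast] at hm'
  exact h.mem_extClosure_shiftsLe _ D hD hm'

lemma IsTStructure.exists_mem_heart : ∃ Z, Z ∈ heart X Y := ⟨0, h.zeroHeart⟩

end TStr

lemma extClosure_empty {D : C} (hD : D ∈ extClosure (∅ : Set C)) : False := by
  induction hD with
  | of h => exact h
  | iso e _ ih => exact ih
  | ext f g w hTr _ _ ihA _ => exact ihA

end Aux

/-- If `(X, Y)` is a bounded t-structure whose heart is the extension closure of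
finitely many objects, and `(X', Y')` is any bounded t-structure, then there are integers
`m ≥ n` with `X⟦m⟧ ⊆ X' ⊆ X⟦n⟧`. -/
theorem statement3 (X Y X' Y' : Set C)
    (h : IsTStructure X Y) (hb : IsBounded X Y)
    (h' : IsTStructure X' Y') (hb' : IsBounded X' Y')
    (t : ℕ) (G : Fin t → C) (hgen : heart X Y = extClosure (Set.range G)) :
    ∃ m n : ℤ, n ≤ m ∧ shiftSet X m ⊆ X' ∧ X' ⊆ shiftSet X n := by
  rcases Nat.eq_zero_or_pos t with ht | ht
  · exfalso
    subst ht
    obtain ⟨Z, hZ⟩ := h.exists_mem_heart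
    rw [hgen, Set.range_eq_empty G] at hZ
    exact extClosure_empty hZ
  · haveI : Nonempty (Fin t) := ⟨⟨0, ht⟩⟩
    choose a ha using fun i => hb'.1 (G i)
    choose b hby using fun i => hb'.2 (G i)
    set a₀ := Finset.univ.inf' Finset.univ_nonempty a with ha₀
    set b₀ := Finset.univ.sup' Finset.univ_nonempty b with hb₀
    -- the heart of (X, Y) sits inside X'⟦a₀⟧ and Y'⟦b₀⟧
    have hGa : ∀ i, G i ∈ shiftSet X' a₀ := fun i =>
      h'.shiftSetX_anti (Finset.inf'_le a (Finset.mem_univ i)) (ha i)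
    have hGb : ∀ i, G i ∈ shiftSet Y' b₀ := fun i =>
      h'.shiftSetY_mono (Finset.le_sup' b (Finset.mem_univ i)) (hby i)
    have hHa : heart X Y ⊆ shiftSet X' a₀ := by
      rw [hgen]
      refine extClosure_subset_of_extIso ?_ (extIso_shiftSet h'.extIsoX a₀)
      rintro z ⟨i, rfl⟩
      exact hGa i
    have hHb : heart X Y ⊆ shiftSet Y' b₀ := by
      rw [hgen]
      refine extClosure_subset_of_extIso ?_ (extIso_shiftSet h'.extIsoY b₀)
      rintro z ⟨i, rfl⟩
      exact hGb i
    -- nonnegative shifts of the heart stay in X'⟦a₀⟧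
    have hGe : shiftsGe (heart X Y) 0 ⊆ shiftSet X' a₀ := by
      rintro z ⟨h₀, hh₀, i, hi, ⟨e⟩⟩
      obtain ⟨x, hx, ⟨e'⟩⟩ := hHa hh₀
      exact ⟨x⟦i⟧, h'.shiftX hx i hi,
        ⟨e ≪≫ (shiftFunctor C i).mapIso e' ≪≫ shAdd x a₀ i (a₀ + i) rfl ≪≫
          (shAdd x i a₀ (a₀ + i) (by ring)).symm⟩⟩
    have hLe : shiftsLe (heart X Y) (-1) ⊆ shiftSet Y' b₀ := by
      rintro z ⟨h₀, hh₀, i, hi, ⟨e⟩⟩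
      obtain ⟨y, hy, ⟨e'⟩⟩ := hHb hh₀
      exact ⟨y⟦i⟧, h'.shiftY hy i (by omega),
        ⟨e ≪≫ (shiftFunctor C i).mapIso e' ≪≫ shAdd y b₀ i (b₀ + i) rfl ≪≫
          (shAdd y i b₀ (b₀ + i) (by ring)).symm⟩⟩
    have hXa : X ⊆ shiftSet X' a₀ := fun D hD =>
      extClosure_subset_of_extIso hGe (extIso_shiftSet h'.extIsoX a₀) (h.X_subset hb hD)
    have hYb : Y ⊆ shiftSet Y' b₀ := fun D hD =>
      extClosure_subset_of_extIso hLe (extIso_shiftSet h'.extIsoY b₀) (h.Y_subset hb hD)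
    -- X⟦-a₀⟧ ⊆ X'
    have hXmA : shiftSet X (-a₀) ⊆ X' := by
      rintro z ⟨x, hx, ⟨e⟩⟩
      obtain ⟨x', hx', ⟨e'⟩⟩ := hXa hx
      refine h'.extIsoX.iso ?_ hx'
      exact (e ≪≫ (shiftFunctor C (-a₀)).mapIso e' ≪≫ shAdd x' a₀ (-a₀) 0 (by ring) ≪≫
        (shiftFunctorZero C ℤ).app x').symm
    -- Y⟦-b₀⟧ ⊆ Y'
    have hYmB : shiftSet Y (-b₀) ⊆ Y' := by
      rintro z ⟨y, hy, ⟨e⟩⟩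
      obtain ⟨y', hy', ⟨e'⟩⟩ := hYb hy
      refine h'.extIsoY.iso ?_ hy'
      exact (e ≪≫ (shiftFunctor C (-b₀)).mapIso e' ≪≫ shAdd y' b₀ (-b₀) 0 (by ring) ≪≫
        (shiftFunctorZero C ℤ).app y').symm
    -- X' ⊆ X⟦-b₀⟧
    have hX'b : X' ⊆ shiftSet X (-b₀) := by
      intro x' hx'
      refine ⟨x'⟦b₀⟧, ?_, ⟨((shAdd x' b₀ (-b₀) 0 (by ring)) ≪≫
        (shiftFunctorZero C ℤ).app x').symm⟩⟩
      rw [← h.lp]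
      intro F hF φ
      have hF' : F⟦-b₀⟧ ∈ Y' := hYmB ⟨F, hF, ⟨Iso.refl _⟩⟩
      set eη : x' ≅ (x'⟦b₀⟧)⟦-b₀⟧ :=
        ((shAdd x' b₀ (-b₀) 0 (by ring)) ≪≫ (shiftFunctorZero C ℤ).app x').symm with heη
      have h0 : eη.hom ≫ (shiftFunctor C (-b₀)).map φ = 0 := h'.homZero hx' hF' _
      apply (shiftFunctor C (-b₀)).map_injective
      rw [Functor.map_zero]
      calc (shiftFunctor C (-b₀)).map φ
          = eη.inv ≫ (eη.hom ≫ (shiftFunctor C (-b₀)).map φ) := by simp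
        _ = 0 := by rw [h0, comp_zero]
    refine ⟨-a₀, min (-b₀) (-a₀), min_le_right _ _, hXmA, ?_⟩
    intro z hz
    exact h.shiftSetX_anti (min_le_left _ _) (hX'b hz)

end Paper
end

section
/- Let (X_T, Y_T) and (X, Y) be t-structures on a triangulated category D with heart H_T = X_T ∩ Y_T[1], and suppose Y_T ⊆ Y (equivalently X ⊆ X_T). Set F = H_T ∩ Y. Then F is closed under extensions, direct summands, and subobjects in the abelian category H_T. -/
open CategoryTheory Category Limits Pretriangulated

namespace Paper

variable {C : Type*} [Category C] [HasZeroObject C] [Preadditive C] [HasShift C ℤ]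
  [∀ n : ℤ, (shiftFunctor C n).Additive] [Pretriangulated C]

/-- Given t-structures `(X_T, Y_T)` and `(X, Y)` with `Y_T ⊆ Y`, the class
`F = H_T ∩ Y` is closed under extensions, direct summands and subobjects in the heart `H_T`
(short exact sequences in `H_T` being expressed by distinguished triangles). -/
theorem statement4 (XT YT X Y : Set C)
    (hT : IsTStructure XT YT) (h : IsTStructure X Y) (hYY : YT ⊆ Y) :
    (∀ (A E B : C) (f : A ⟶ E) (g : E ⟶ B) (w : B ⟶ A⟦(1 : ℤ)⟧),
        Triangle.mk f g w ∈ (distTriang C) →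
        A ∈ heart XT YT ∩ Y → B ∈ heart XT YT ∩ Y → E ∈ heart XT YT →
        E ∈ heart XT YT ∩ Y) ∧
    (∀ A E : C, E ∈ heart XT YT ∩ Y → A ∈ heart XT YT →
        (∃ (s : A ⟶ E) (r : E ⟶ A), s ≫ r = 𝟙 A) → A ∈ heart XT YT ∩ Y) ∧
    (∀ (A E B : C) (f : A ⟶ E) (g : E ⟶ B) (w : B ⟶ A⟦(1 : ℤ)⟧),
        Triangle.mk f g w ∈ (distTriang C) →
        A ∈ heart XT YT → B ∈ heart XT YT → E ∈ heart XT YT ∩ Y →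
        A ∈ heart XT YT ∩ Y) := by
  have hYperp : Y = rightPerp X := h.rp.symm
  refine ⟨?_, ?_, ?_⟩
  · -- extensions
    rintro A E B f g w hTri ⟨hAH, hAY⟩ ⟨hBH, hBY⟩ hEH
    refine ⟨hEH, ?_⟩
    rw [hYperp]
    intro W hW φ
    have hφg : φ ≫ g = 0 := by
      have := (hYperp ▸ hBY) W hW (φ ≫ g)
      exact this
    obtain ⟨ψ, hψ⟩ := Triangle.coyoneda_exact₂ _ hTri φ hφg
    have : ψ = 0 := (hYperp ▸ hAY) W hW ψ
    rw [hψ, this, zero_comp]; rfl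
  · -- direct summands
    rintro A E ⟨hEH, hEY⟩ hAH ⟨s, r, hsr⟩
    refine ⟨hAH, ?_⟩
    rw [hYperp]
    intro W hW φ
    have hφs : φ ≫ s = 0 := (hYperp ▸ hEY) W hW (φ ≫ s)
    calc φ = φ ≫ s ≫ r := by rw [hsr, comp_id]
    _ = (φ ≫ s) ≫ r := by rw [assoc]
    _ = 0 := by rw [hφs, zero_comp]
  · -- subobjects
    rintro A E B f g w hTri hAH hBH ⟨hEH, hEY⟩
    refine ⟨hAH, ?_⟩
    rw [hYperp]
    intro W hW φ
    -- φ ≫ f = 0 since E ∈ Y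
    have hφf : φ ≫ f = 0 := (hYperp ▸ hEY) W hW (φ ≫ f)
    -- inverse rotation: B⟦-1⟧ → A → E → B
    have hTri' := inv_rot_of_distTriang _ hTri
    obtain ⟨ψ, hψ⟩ := Triangle.coyoneda_exact₂ _ hTri' φ hφf
    -- ψ : W ⟶ B⟦-1⟧ ; but B ≅ B'⟦1⟧ with B' ∈ YT ⊆ Y
    obtain ⟨_, ⟨B', hB', ⟨e⟩⟩⟩ := hBH
    have e2 : B⟦(-1:ℤ)⟧ ≅ B' :=
      (shiftFunctor C (-1:ℤ)).mapIso e ≪≫ (shiftFunctorCompIsoId C 1 (-1) (by ring)).app B'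
    have hB'Y : B' ∈ rightPerp X := hYperp ▸ hYY hB'
    have hψe : ψ ≫ e2.hom = 0 := hB'Y W hW (ψ ≫ e2.hom)
    have hψ0 : ψ = 0 := by
      exact (cancel_mono e2.hom).1 (hψe.trans (zero_comp).symm)
    rw [hψ, hψ0, zero_comp]; rfl

end Paper
end
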